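/- Let H and K be bounded self-adjoint operators on a complex Hilbert space with K = H - (·,u)u. For s > 0, let E_H = Ker(H - s²I) and E_K = Ker(K - s²I). If u is not orthogonal to E_K, then u is orthogonal to E_H and E_H = E_K ∩ u^⊥. -/

import Mathlib

open ComplexConjugate

/-- If `K = H - (·,u)u` are bounded self-adjoint operators, `s > 0`,
`E_H = Ker(H - s²I)`, `E_K = Ker(K - s²I)`, and `u` is not orthogonal to `E_K`,
then `u ⟂ E_H` and `E_H = E_K ∩ u^⊥`. -/
theorem schmidt_rank_one_K_dominant
    {E : Type*} [NormedAddCommGroup E] [InnerProductSpace ℂ E] [CompleteSpace E]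
    (H K : E →L[ℂ] E) (hHsa : IsSelfAdjoint H) (hKsa : IsSelfAdjoint K) (u : E)
    (hrank1 : ∀ f : E, K f = H f - (inner ℂ u f : ℂ) • u)
    (s : ℝ) (hs : 0 < s)
    (hdom : ∃ f : E, K f = ((s : ℂ) ^ 2) • f ∧ (inner ℂ u f : ℂ) ≠ 0) :
    (∀ g : E, H g = ((s : ℂ) ^ 2) • g → (inner ℂ u g : ℂ) = 0) ∧
    (∀ g : E, H g = ((s : ℂ) ^ 2) • g ↔ (K g = ((s : ℂ) ^ 2) • g ∧ (inner ℂ u g : ℂ) = 0)) := by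
  obtain ⟨f, hf, hfu⟩ := hdom
  have key : ∀ g : E, H g = ((s : ℂ) ^ 2) • g → (inner ℂ u g : ℂ) = 0 := by
    intro g hg
    have hsym : (inner ℂ (K f) g : ℂ) = inner ℂ f (K g) := hKsa.isSymmetric f g
    rw [hf, hrank1 g, hg] at hsym
    rw [inner_smul_left, inner_sub_right, inner_smul_right, inner_smul_right] at hsym
    have : (inner ℂ u g : ℂ) * inner ℂ f u = 0 := by
      have hconj : (starRingEnd ℂ) ((s:ℂ)^2) = (s:ℂ)^2 := by
        simp [Complex.ext_iff]
      rw [hconj] at hsym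
      linear_combination hsym
    rcases mul_eq_zero.mp this with h | h
    · exact h
    · exfalso
      apply hfu
      have := congrArg (starRingEnd ℂ) h
      rw [map_zero] at this
      rw [← inner_conj_symm]
      simp [this]
  refine ⟨key, fun g => ⟨fun hg => ?_, fun ⟨hKg, hug⟩ => ?_⟩⟩
  · have h0 := key g hg
    refine ⟨?_, h0⟩
    rw [hrank1 g, hg, h0, zero_smul, sub_zero]
  · have := hrank1 g
    rw [hKg, hug, zero_smul, sub_zero] at this
    exact this.symm
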